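/- Confluence up to isomorphism holds with a diamond-like bound for the local case: if H → H₁ and H → H₂ by single rule applications, then either H₁ is isomorphic to H₂, or there exists H₃ such that H₁ → H₃' and H₂ → H₃'' with H₃' = H₃'' = H₃ (a single further step from each side reaches a common hypergraph). -/

import Mathlib

/-- A hypergraph: finite node set, finite edge set, incidence relation. -/
structure HG where
  V : Finset ℕ
  E : Finset ℕ
  I : Finset (ℕ × ℕ)

/-- Nodes incident to edge `e`. -/
def HG.Ve (H : HG) (e : ℕ) : Finset ℕ := H.V.filter (fun v => (v, e) ∈ H.I)

/-- Edges incident to node `v`. -/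
def HG.Ev (H : HG) (v : ℕ) : Finset ℕ := H.E.filter (fun e => (v, e) ∈ H.I)

/-- Remove edge `e'` (and its incidences). -/
def HG.removeEdge (H : HG) (e' : ℕ) : HG :=
  ⟨H.V, H.E.erase e', H.I.filter (fun p => p.2 ≠ e')⟩

/-- Remove node `v` (and its incidences). -/
def HG.removeNode (H : HG) (v : ℕ) : HG :=
  ⟨H.V.erase v, H.E, H.I.filter (fun p => p.1 ≠ v)⟩

/-- Edge-domination step: remove a dominating edge `e'`. -/
def EdgeStep (H H' : HG) : Prop :=
  ∃ e e', e ∈ H.E ∧ e' ∈ H.E ∧ e ≠ e' ∧ H.Ve e ⊆ H.Ve e' ∧ H' = H.removeEdge e'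

/-- Node-domination step: remove a dominated node `v`. -/
def NodeStep (H H' : HG) : Prop :=
  ∃ v v', v ∈ H.V ∧ v' ∈ H.V ∧ v ≠ v' ∧ H.Ev v ⊆ H.Ev v' ∧ H' = H.removeNode v

/-- One application of either rewrite rule. -/
def Step (H H' : HG) : Prop := EdgeStep H H' ∨ NodeStep H H'

/-- Hypergraph isomorphism. -/
def Iso (H H' : HG) : Prop :=
  ∃ f : {x // x ∈ H'.V} ≃ {x // x ∈ H.V}, ∃ g : {x // x ∈ H'.E} ≃ {x // x ∈ H.E},
    ∀ (v : {x // x ∈ H'.V}) (e : {x // x ∈ H'.E}),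
      ((v : ℕ), (e : ℕ)) ∈ H'.I ↔ ((f v : ℕ), (g e : ℕ)) ∈ H.I

/-- One rewrite step between isomorphism classes, via representatives. -/
def StepIso (H K : HG) : Prop := ∃ H' K', Iso H H' ∧ Iso K K' ∧ Step H' K'

section Aux

lemma mem_Ve {H : HG} {v e : ℕ} : v ∈ H.Ve e ↔ v ∈ H.V ∧ (v, e) ∈ H.I := by
  simp [HG.Ve]

lemma mem_Ev {H : HG} {v e : ℕ} : e ∈ H.Ev v ↔ e ∈ H.E ∧ (v, e) ∈ H.I := by
  simp [HG.Ev]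

lemma Ve_removeEdge {H : HG} {e' e : ℕ} (h : e ≠ e') :
    (H.removeEdge e').Ve e = H.Ve e := by
  ext v; simp [HG.Ve, HG.removeEdge, h]

lemma Ev_removeEdge {H : HG} {e' v : ℕ} :
    (H.removeEdge e').Ev v = (H.Ev v).erase e' := by
  ext e; simp [HG.Ev, HG.removeEdge, Finset.mem_erase]; tauto

lemma Ev_removeNode {H : HG} {v₀ v : ℕ} (h : v ≠ v₀) :
    (H.removeNode v₀).Ev v = H.Ev v := by
  ext e; simp [HG.Ev, HG.removeNode, h]

lemma Ve_removeNode {H : HG} {v₀ e : ℕ} :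
    (H.removeNode v₀).Ve e = (H.Ve e).erase v₀ := by
  ext v; simp [HG.Ve, HG.removeNode, Finset.mem_erase]; tauto

lemma removeEdge_comm (H : HG) (a b : ℕ) :
    (H.removeEdge a).removeEdge b = (H.removeEdge b).removeEdge a := by
  simp only [HG.removeEdge]
  congr 1
  · ext x; simp only [Finset.mem_erase]; tauto
  · rw [Finset.filter_filter, Finset.filter_filter]
    simp only [and_comm]

lemma removeNode_comm (H : HG) (a b : ℕ) :
    (H.removeNode a).removeNode b = (H.removeNode b).removeNode a := by
  simp only [HG.removeNode]
  congr 1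
  · ext x; simp only [Finset.mem_erase]; tauto
  · rw [Finset.filter_filter, Finset.filter_filter]
    simp only [and_comm]

lemma removeEdge_removeNode (H : HG) (e v : ℕ) :
    (H.removeEdge e).removeNode v = (H.removeNode v).removeEdge e := by
  simp only [HG.removeEdge, HG.removeNode]
  congr 1
  rw [Finset.filter_filter, Finset.filter_filter]
  simp only [and_comm]

lemma Iso_refl (H : HG) : Iso H H := ⟨Equiv.refl _, Equiv.refl _, fun _ _ => Iff.rfl⟩

lemma iso_removeEdge_swap {H : HG} {a b : ℕ} (ha : a ∈ H.E) (hb : b ∈ H.E)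
    (hab : a ≠ b) (hVe : H.Ve a = H.Ve b) :
    Iso (H.removeEdge a) (H.removeEdge b) := by
  refine ⟨Equiv.refl _, (Equiv.swap a b).subtypeEquiv ?_, ?_⟩
  · intro x
    simp only [HG.removeEdge, Finset.mem_erase]
    rcases eq_or_ne x a with rfl | hxa
    · simp [Equiv.swap_apply_left, hab, hab.symm, ha, hb]
    · rcases eq_or_ne x b with rfl | hxb
      · simp [Equiv.swap_apply_right, hab, hab.symm, ha, hb]
      · simp [Equiv.swap_apply_of_ne_of_ne hxa hxb, hxa, hxb]
  · rintro ⟨v, hv⟩ ⟨e, he⟩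
    have hv' : v ∈ H.V := hv
    simp only [HG.removeEdge, Finset.mem_erase] at he
    simp only [HG.removeEdge, Finset.mem_filter, Equiv.subtypeEquiv_apply, Equiv.refl_apply]
    rcases eq_or_ne e a with rfl | hea
    · have h1 : v ∈ H.Ve e ↔ v ∈ H.Ve b := by rw [hVe]
      rw [mem_Ve, mem_Ve] at h1
      change _ ↔ (v, Equiv.swap e b e) ∈ H.I ∧ Equiv.swap e b e ≠ e
      rw [Equiv.swap_apply_left]
      constructor
      · rintro ⟨hI, -⟩; exact ⟨(h1.mp ⟨hv', hI⟩).2, hab.symm⟩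
      · rintro ⟨hI, -⟩; exact ⟨(h1.mpr ⟨hv', hI⟩).2, he.1⟩
    · change _ ↔ (v, Equiv.swap a b e) ∈ H.I ∧ Equiv.swap a b e ≠ a
      rw [Equiv.swap_apply_of_ne_of_ne hea he.1]
      simp [he.1, hea]

lemma iso_removeNode_swap {H : HG} {a b : ℕ} (ha : a ∈ H.V) (hb : b ∈ H.V)
    (hab : a ≠ b) (hEv : H.Ev a = H.Ev b) :
    Iso (H.removeNode a) (H.removeNode b) := by
  refine ⟨(Equiv.swap a b).subtypeEquiv ?_, Equiv.refl _, ?_⟩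
  · intro x
    simp only [HG.removeNode, Finset.mem_erase]
    rcases eq_or_ne x a with rfl | hxa
    · simp [Equiv.swap_apply_left, hab, hab.symm, ha, hb]
    · rcases eq_or_ne x b with rfl | hxb
      · simp [Equiv.swap_apply_right, hab, hab.symm, ha, hb]
      · simp [Equiv.swap_apply_of_ne_of_ne hxa hxb, hxa, hxb]
  · rintro ⟨v, hv⟩ ⟨e, he⟩
    have he' : e ∈ H.E := he
    simp only [HG.removeNode, Finset.mem_erase] at hv
    simp only [HG.removeNode, Finset.mem_filter, Equiv.subtypeEquiv_apply, Equiv.refl_apply]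
    rcases eq_or_ne v a with rfl | hva
    · have h1 : e ∈ H.Ev v ↔ e ∈ H.Ev b := by rw [hEv]
      rw [mem_Ev, mem_Ev] at h1
      change _ ↔ (Equiv.swap v b v, e) ∈ H.I ∧ Equiv.swap v b v ≠ v
      rw [Equiv.swap_apply_left]
      constructor
      · rintro ⟨hI, -⟩; exact ⟨(h1.mp ⟨he', hI⟩).2, hab.symm⟩
      · rintro ⟨hI, -⟩; exact ⟨(h1.mpr ⟨he', hI⟩).2, hv.1⟩
    · change _ ↔ (Equiv.swap a b v, e) ∈ H.I ∧ Equiv.swap a b v ≠ a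
      rw [Equiv.swap_apply_of_ne_of_ne hva hv.1]
      simp [hv.1, hva]

/-- After removing dominating edge `e₁'`, one can still remove `e₂'`
(non-degenerate case). -/
lemma edge_diamond_step {H : HG} {e₁ e₁' e₂ e₂' : ℕ}
    (h₁e : e₁ ∈ H.E) (h₁e' : e₁' ∈ H.E) (h₁ne : e₁ ≠ e₁') (h₁s : H.Ve e₁ ⊆ H.Ve e₁')
    (h₂e : e₂ ∈ H.E) (h₂e' : e₂' ∈ H.E) (h₂ne : e₂ ≠ e₂') (h₂s : H.Ve e₂ ⊆ H.Ve e₂')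
    (hne : e₁' ≠ e₂') (hnd : ¬(e₁ = e₂' ∧ e₂ = e₁')) :
    EdgeStep (H.removeEdge e₁') ((H.removeEdge e₁').removeEdge e₂') := by
  rcases eq_or_ne e₂ e₁' with rfl | hw
  · -- witness e₁, with Ve e₁ ⊆ Ve e₂(=e₁') ⊆ Ve e₂'
    have h₁2 : e₁ ≠ e₂' := fun h => hnd ⟨h, rfl⟩
    refine ⟨e₁, e₂', ?_, ?_, h₁2, ?_, rfl⟩
    · exact Finset.mem_erase.mpr ⟨h₁ne, h₁e⟩
    · exact Finset.mem_erase.mpr ⟨hne.symm, h₂e'⟩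
    · rw [Ve_removeEdge h₁ne, Ve_removeEdge hne.symm]
      exact h₁s.trans h₂s
  · refine ⟨e₂, e₂', ?_, ?_, h₂ne, ?_, rfl⟩
    · exact Finset.mem_erase.mpr ⟨hw, h₂e⟩
    · exact Finset.mem_erase.mpr ⟨hne.symm, h₂e'⟩
    · rw [Ve_removeEdge hw, Ve_removeEdge hne.symm]
      exact h₂s

/-- After removing dominated node `v₁`, one can still remove `v₂`
(non-degenerate case). -/
lemma node_diamond_step {H : HG} {v₁ v₁' v₂ v₂' : ℕ}
    (h₁v : v₁ ∈ H.V) (h₁v' : v₁' ∈ H.V) (h₁ne : v₁ ≠ v₁') (h₁s : H.Ev v₁ ⊆ H.Ev v₁')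
    (h₂v : v₂ ∈ H.V) (h₂v' : v₂' ∈ H.V) (h₂ne : v₂ ≠ v₂') (h₂s : H.Ev v₂ ⊆ H.Ev v₂')
    (hne : v₁ ≠ v₂) (hnd : ¬(v₂' = v₁ ∧ v₁' = v₂)) :
    NodeStep (H.removeNode v₁) ((H.removeNode v₁).removeNode v₂) := by
  rcases eq_or_ne v₂' v₁ with rfl | hw
  · -- witness dominator v₁', with Ev v₂ ⊆ Ev v₂'(=v₁) ⊆ Ev v₁'
    have h2v : v₂ ≠ v₁' := fun h => hnd ⟨rfl, h.symm⟩
    refine ⟨v₂, v₁', ?_, ?_, h2v, ?_, rfl⟩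
    · exact Finset.mem_erase.mpr ⟨hne.symm, h₂v⟩
    · exact Finset.mem_erase.mpr ⟨h₁ne.symm, h₁v'⟩
    · rw [Ev_removeNode hne.symm, Ev_removeNode h₁ne.symm]
      exact h₂s.trans h₁s
  · refine ⟨v₂, v₂', ?_, ?_, h₂ne, ?_, rfl⟩
    · exact Finset.mem_erase.mpr ⟨hne.symm, h₂v⟩
    · exact Finset.mem_erase.mpr ⟨hw, h₂v'⟩
    · rw [Ev_removeNode hne.symm, Ev_removeNode hw]
      exact h₂s

lemma mixed_node_step {H : HG} {e' v v' : ℕ}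
    (hv : v ∈ H.V) (hv' : v' ∈ H.V) (hne : v ≠ v') (hs : H.Ev v ⊆ H.Ev v') :
    NodeStep (H.removeEdge e') ((H.removeEdge e').removeNode v) := by
  refine ⟨v, v', hv, hv', hne, ?_, rfl⟩
  rw [Ev_removeEdge, Ev_removeEdge]
  exact Finset.erase_subset_erase _ hs

lemma mixed_edge_step {H : HG} {v e e' : ℕ}
    (he : e ∈ H.E) (he' : e' ∈ H.E) (hne : e ≠ e') (hs : H.Ve e ⊆ H.Ve e') :
    EdgeStep (H.removeNode v) ((H.removeNode v).removeEdge e') := by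
  refine ⟨e, e', he, he', hne, ?_, rfl⟩
  rw [Ve_removeNode, Ve_removeNode]
  exact Finset.erase_subset_erase _ hs

end Aux

/-- Diamond-like local confluence: one step from each side reaches a common
hypergraph, unless the results are already isomorphic. -/
theorem local_confluence_diamond (H H₁ H₂ : HG)
    (h₁ : Step H H₁) (h₂ : Step H H₂) :
    Iso H₁ H₂ ∨ ∃ H₃ : HG, Step H₁ H₃ ∧ Step H₂ H₃ := by
  rcases h₁ with ⟨e₁, e₁', h₁e, h₁e', h₁ne, h₁s, rfl⟩ | ⟨v₁, v₁', h₁v, h₁v', h₁ne, h₁s, rfl⟩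
  · rcases h₂ with ⟨e₂, e₂', h₂e, h₂e', h₂ne, h₂s, rfl⟩ | ⟨v₂, v₂', h₂v, h₂v', h₂ne, h₂s, rfl⟩
    · -- edge / edge
      rcases eq_or_ne e₁' e₂' with rfl | hne
      · exact Or.inl (Iso_refl _)
      by_cases hnd : e₁ = e₂' ∧ e₂ = e₁'
      · -- degenerate: Ve e₁' = Ve e₂', isomorphic results
        obtain ⟨h1, h2⟩ := hnd
        subst h1; subst h2
        exact Or.inl (iso_removeEdge_swap h₂e h₁e hne
          (Finset.Subset.antisymm h₂s h₁s))
      · refine Or.inr ⟨(H.removeEdge e₁').removeEdge e₂', Or.inl ?_, Or.inl ?_⟩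
        · exact edge_diamond_step h₁e h₁e' h₁ne h₁s h₂e h₂e' h₂ne h₂s hne hnd
        · rw [removeEdge_comm]
          exact edge_diamond_step h₂e h₂e' h₂ne h₂s h₁e h₁e' h₁ne h₁s hne.symm
            (fun h => hnd ⟨h.2, h.1⟩)
    · -- edge / node
      refine Or.inr ⟨(H.removeEdge e₁').removeNode v₂, Or.inr ?_, Or.inl ?_⟩
      · exact mixed_node_step h₂v h₂v' h₂ne h₂s
      · rw [removeEdge_removeNode]
        exact mixed_edge_step h₁e h₁e' h₁ne h₁s
  · rcases h₂ with ⟨e₂, e₂', h₂e, h₂e', h₂ne, h₂s, rfl⟩ | ⟨v₂, v₂', h₂v, h₂v', h₂ne, h₂s, rfl⟩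
    · -- node / edge
      refine Or.inr ⟨(H.removeNode v₁).removeEdge e₂', Or.inl ?_, Or.inr ?_⟩
      · exact mixed_edge_step h₂e h₂e' h₂ne h₂s
      · rw [← removeEdge_removeNode]
        exact mixed_node_step h₁v h₁v' h₁ne h₁s
    · -- node / node
      rcases eq_or_ne v₁ v₂ with rfl | hne
      · exact Or.inl (Iso_refl _)
      by_cases hnd : v₂' = v₁ ∧ v₁' = v₂
      · obtain ⟨h1, h2⟩ := hnd
        subst h1; subst h2
        exact Or.inl (iso_removeNode_swap h₁v h₂v hne
          (Finset.Subset.antisymm h₁s h₂s))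
      · refine Or.inr ⟨(H.removeNode v₁).removeNode v₂, Or.inr ?_, Or.inr ?_⟩
        · exact node_diamond_step h₁v h₁v' h₁ne h₁s h₂v h₂v' h₂ne h₂s hne hnd
        · rw [removeNode_comm]
          exact node_diamond_step h₂v h₂v' h₂ne h₂s h₁v h₁v' h₁ne h₁s hne.symm
            (fun h => hnd ⟨h.2, h.1⟩)
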